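/- (Lemma 13.) Let τ = (I, L, m) be a triple satisfying conditions (r.1) and (r.2), and let z̃ ∈ {0,1}^n be feasible for problem (pqtype). For i ∈ I define S'_i = V_i ∩ {j : z̃_j = 1}. Then the inequality Σ_{i∈I} i·x(S'_i) ≥ q is valid for Π. -/

import Mathlib

open Finset

/-- The signature σ(τ) = max{Σ_{i∈I} w(T_i) : T_i ⊆ L_i for all i ∈ I and
Σ_{i∈I} i·|T_i| < q}.  Since the sets L_i (i ∈ I) are pairwise disjoint, a family
(T_i)_{i∈I} with T_i ⊆ L_i is encoded by the single set T = ∪_i T_i ⊆ ∪_i L_i,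
with T_i = T ∩ L_i. -/
def signature (n q : ℕ) (w : Fin n → ℕ) (I : Finset ℕ)
    (L : ℕ → Finset (Fin n)) : ℕ :=
  ((I.biUnion L).powerset.filter
      (fun T => ∑ i ∈ I, i * (T ∩ L i).card < q)).sup
    (fun T => ∑ j ∈ T, w j)

/-- F_i = ∪_{k∈I, k≠i} ({m_k} ∪ L_k). -/
def Fset (n : ℕ) (I : Finset ℕ) (L : ℕ → Finset (Fin n)) (m : ℕ → Fin n)
    (i : ℕ) : Finset (Fin n) :=
  (I.erase i).biUnion (fun k => insert (m k) (L k))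

/-- R_i = {j ∉ F_i : w_{m_i} ≤ w_j ≤ M_i} if |L_i| ≥ q−1, and ∅ otherwise, where
M_i = min{min_{h∈L_i} w_h, min{w_{m_k} − 1 : k ∈ I, k > i}}; the condition
w_j ≤ M_i is unfolded as (∀ h ∈ L_i, w_j ≤ w_h) ∧ (∀ k ∈ I, i < k → w_j < w_{m_k}). -/
def Rset (n q : ℕ) (w : Fin n → ℕ) (I : Finset ℕ) (L : ℕ → Finset (Fin n))
    (m : ℕ → Fin n) (i : ℕ) : Finset (Fin n) :=
  if q - 1 ≤ (L i).card then
    Finset.univ.filter (fun j =>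
      j ∉ Fset n I L m i ∧ w (m i) ≤ w j ∧ (∀ h ∈ L i, w j ≤ w h) ∧
        ∀ k ∈ I, i < k → w j < w (m k))
  else ∅

/-- V_i = R_i ∪ L_i. -/
def Vset (n q : ℕ) (w : Fin n → ℕ) (I : Finset ℕ) (L : ℕ → Finset (Fin n))
    (m : ℕ → Fin n) (i : ℕ) : Finset (Fin n) :=
  Rset n q w I L m i ∪ L i

/-- z ∈ {0,1}^n is feasible for problem (pqtype): z_j = 1 on ∪_{i∈I}({m_i} ∪ L_i),
z_j = 0 outside ∪_{i∈I} V_i, and Σ w_j z_j ≥ σ(τ) + Σ w_j − w₀ + 1. -/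
def PqFeasible (n q : ℕ) (w : Fin n → ℕ) (w0 : ℕ) (I : Finset ℕ)
    (L : ℕ → Finset (Fin n)) (m : ℕ → Fin n) (z : Fin n → ℝ) : Prop :=
  (∀ j, z j = 0 ∨ z j = 1) ∧
  (∀ i ∈ I, z (m i) = 1 ∧ ∀ j ∈ L i, z j = 1) ∧
  (∀ j : Fin n, (∀ i ∈ I, j ∉ Vset n q w I L m i) → z j = 0) ∧
  ((signature n q w I L : ℝ) + ∑ j, (w j : ℝ) - (w0 : ℝ) + 1 ≤
    ∑ j, (w j : ℝ) * z j)

/-- Condition (r.1): the sets {m_i} ∪ L_i (i ∈ I) are pairwise disjoint; if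
|L_i| < q−1 then m_i ∈ L_i; and if m_i ∉ L_i then w_{m_i} < w_{m_k} for all
k ∈ I with k > i. -/
def Rone (n q : ℕ) (w : Fin n → ℕ) (I : Finset ℕ) (L : ℕ → Finset (Fin n))
    (m : ℕ → Fin n) : Prop :=
  (∀ i ∈ I, ∀ k ∈ I, i ≠ k →
      Disjoint (insert (m i) (L i)) (insert (m k) (L k))) ∧
  (∀ i ∈ I, (L i).card < q - 1 → m i ∈ L i) ∧
  (∀ i ∈ I, m i ∉ L i → ∀ k ∈ I, i < k → w (m i) < w (m k))


lemma sum_biUnion_le_nat {ι α : Type*} [DecidableEq ι] [DecidableEq α] (s : Finset ι)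
    (t : ι → Finset α) (f : α → ℕ) :
    ∑ j ∈ s.biUnion t, f j ≤ ∑ i ∈ s, ∑ j ∈ t i, f j := by
  classical
  induction s using Finset.induction_on with
  | empty => simp
  | insert _ _ h ih =>
    rename_i a s
    rw [Finset.biUnion_insert, Finset.sum_insert h]
    have h1 := Finset.sum_union_inter (s₁ := t a) (s₂ := s.biUnion t) (f := f)
    omega

/-- Lemma 13: if τ = (I, L, m) satisfies (r.1) and (r.2) and
z̃ ∈ {0,1}^n is feasible for problem (pqtype), then with S'_i = V_i ∩ {j : z̃_j = 1}
(i ∈ I), the inequality Σ_{i∈I} i·x(S'_i) ≥ q is valid for Π. -/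
theorem stmt_18 (n : ℕ) (hn : 0 < n) (w : Fin n → ℕ) (w0 : ℕ)
    (hw : ∀ j, w j ≤ w0) (q : ℕ) (hq : 2 ≤ q)
    (I : Finset ℕ) (hI : I ⊆ Finset.Icc 1 q)
    (L : ℕ → Finset (Fin n)) (m : ℕ → Fin n)
    (hr1 : Rone n q w I L m)
    (hr2 : ∀ i ∈ I, (L i).card ≤ q ^ 2)
    (z : Fin n → ℝ) (hz : PqFeasible n q w w0 I L m z)
    (S' : ℕ → Finset (Fin n))
    (hS' : ∀ i ∈ I, ∀ j : Fin n, j ∈ S' i ↔ j ∈ Vset n q w I L m i ∧ z j = 1) :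
    ∀ x : Fin n → ℝ, (∀ j, x j = 0 ∨ x j = 1) →
      (w0 : ℝ) ≤ ∑ j, (w j : ℝ) * x j →
      (q : ℝ) ≤ ∑ i ∈ I, (i : ℝ) * ∑ j ∈ S' i, x j := by
  classical
  obtain ⟨hz01, hzfix, hzout, hzval⟩ := hz
  obtain ⟨hdisj, hmemL, hmw⟩ := hr1
  intro x hx hxge
  by_contra hcon
  push_neg at hcon
  -- basic disjointness of the L's
  have hLdisj : ∀ i ∈ I, ∀ k ∈ I, i ≠ k → Disjoint (L i) (L k) := fun i hi k hk hik =>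
    (hdisj i hi k hk hik).mono (Finset.subset_insert _ _) (Finset.subset_insert _ _)
  -- unfolding membership in Rset
  have hR : ∀ i j, j ∈ Rset n q w I L m i →
      (q - 1 ≤ (L i).card ∧ j ∉ Fset n I L m i ∧ w (m i) ≤ w j ∧
        (∀ h ∈ L i, w j ≤ w h) ∧ ∀ k ∈ I, i < k → w j < w (m k)) := by
    intro i j hj
    unfold Rset at hj
    split at hj
    · rename_i hcond
      simp only [Finset.mem_filter, Finset.mem_univ, true_and] at hj
      exact ⟨hcond, hj⟩
    · simp at hj
  -- the sets involved
  set X1 : Finset (Fin n) := Finset.univ.filter (fun j => x j = 1 ∧ z j = 1) with hX1def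
  set A : ℕ → Finset (Fin n) := fun i => (S' i).filter (fun j => x j = 1) with hAdef
  -- sum of x over S' i equals card of A i
  have hsumA : ∀ i, ∑ j ∈ S' i, x j = ((A i).card : ℝ) := by
    intro i
    rw [← Finset.sum_filter_add_sum_filter_not (S' i) (fun j => x j = 1)]
    have h2 : ∑ j ∈ (S' i).filter (fun j => ¬ x j = 1), x j = 0 := by
      apply Finset.sum_eq_zero
      intro j hj
      rcases hx j with h | h
      · exact h
      · exact absurd h (Finset.mem_filter.mp hj).2
    have h1 : ∑ j ∈ (S' i).filter (fun j => x j = 1), x j = ((A i).card : ℝ) := by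
      rw [Finset.sum_congr rfl (fun j hj => (Finset.mem_filter.mp hj).2)]
      simp [hAdef]
    rw [h1, h2, add_zero]
  have hcard : ∑ i ∈ I, i * (A i).card < q := by
    have : ∑ i ∈ I, (i : ℝ) * ((A i).card : ℝ) < (q : ℝ) := by
      calc ∑ i ∈ I, (i : ℝ) * ((A i).card : ℝ)
          = ∑ i ∈ I, (i : ℝ) * ∑ j ∈ S' i, x j :=
            Finset.sum_congr rfl (fun i _ => by rw [hsumA])
        _ < q := hcon
    exact_mod_cast this
  have hci : ∀ i ∈ I, (A i).card < q := by
    intro i hi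
    have h1 : 1 ≤ i := (Finset.mem_Icc.mp (hI hi)).1
    have h2 : i * (A i).card ≤ ∑ k ∈ I, k * (A k).card :=
      Finset.single_le_sum (f := fun k => k * (A k).card) (fun k _ => Nat.zero_le _) hi
    have h3 : (A i).card ≤ i * (A i).card := Nat.le_mul_of_pos_left _ h1
    omega
  -- A i is inside S' i, hence inside V i
  have hAV : ∀ i ∈ I, ∀ j ∈ A i, j ∈ Vset n q w I L m i := by
    intro i hi j hj
    have hjS : j ∈ S' i := (Finset.mem_filter.mp hj).1
    exact ((hS' i hi j).mp hjS).1
  -- construction of the sets T i ⊆ L i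
  have hTex : ∀ i, ∃ T : Finset (Fin n), i ∈ I →
      T ⊆ L i ∧ T.card = (A i).card ∧ ∑ j ∈ A i, w j ≤ ∑ j ∈ T, w j := by
    intro i
    by_cases hi : i ∈ I
    swap
    · exact ⟨∅, fun h => absurd h hi⟩
    set B : Finset (Fin n) := A i ∩ L i with hBdef
    set D : Finset (Fin n) := A i \ L i with hDdef
    have hDR : ∀ j ∈ D, j ∈ Rset n q w I L m i := by
      intro j hj
      obtain ⟨hjA, hjL⟩ := Finset.mem_sdiff.mp hj
      have := hAV i hi j hjA
      rcases Finset.mem_union.mp this with h | h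
      · exact h
      · exact absurd h hjL
    by_cases hDe : D = ∅
    · refine ⟨A i, fun _ => ⟨?_, rfl, le_refl _⟩⟩
      intro j hj
      by_contra hjL
      exact (Finset.notMem_empty j) (hDe ▸ Finset.mem_sdiff.mpr ⟨hj, hjL⟩)
    · obtain ⟨j0, hj0⟩ := Finset.nonempty_iff_ne_empty.mpr hDe
      have hq1 : q - 1 ≤ (L i).card := (hR i j0 (hDR j0 hj0)).1
      have hAcard : (A i).card ≤ q - 1 := by have := hci i hi; omega
      have hBD : B.card + D.card = (A i).card := Finset.card_inter_add_card_sdiff _ _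
      have hBle : B.card ≤ (L i).card := Finset.card_le_card Finset.inter_subset_right
      have hDle : D.card ≤ (L i \ B).card := by
        have h1 : (L i \ B).card = (L i).card - B.card :=
          Finset.card_sdiff_of_subset Finset.inter_subset_right
        omega
      obtain ⟨C, hCsub, hCcard⟩ := Finset.exists_subset_card_eq hDle
      have hdBC : Disjoint B C :=
        (Finset.disjoint_of_subset_left hCsub Finset.sdiff_disjoint).symm
      refine ⟨B ∪ C, fun _ => ⟨?_, ?_, ?_⟩⟩
      · exact Finset.union_subset Finset.inter_subset_right
          (hCsub.trans Finset.sdiff_subset)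
      · rw [Finset.card_union_of_disjoint hdBC, hCcard]; omega
      · have hLne : (L i).Nonempty := Finset.card_pos.mp (by omega)
        set μ : ℕ := (L i).inf' hLne w with hμ
        have h1 : ∑ j ∈ D, w j ≤ D.card • μ := by
          apply Finset.sum_le_card_nsmul
          intro j hj
          exact Finset.le_inf' hLne w (fun h hh => (hR i j (hDR j hj)).2.2.2.1 h hh)
        have h2 : C.card • μ ≤ ∑ j ∈ C, w j := by
          apply Finset.card_nsmul_le_sum
          intro j hj
          exact Finset.inf'_le w (Finset.mem_sdiff.mp (hCsub hj)).1
        have hsplit : ∑ j ∈ B, w j + ∑ j ∈ D, w j = ∑ j ∈ A i, w j :=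
          Finset.sum_inter_add_sum_sdiff _ _ _
        rw [Finset.sum_union hdBC]
        simp only [smul_eq_mul] at h1 h2
        rw [hCcard] at h2
        omega
  choose T hT using hTex
  set Tset : Finset (Fin n) := I.biUnion T with hTsetdef
  have hTinter : ∀ i ∈ I, Tset ∩ L i = T i := by
    intro i hi
    ext j
    simp only [hTsetdef, Finset.mem_inter, Finset.mem_biUnion]
    constructor
    · rintro ⟨⟨k, hk, hjk⟩, hjL⟩
      by_cases hki : k = i
      · exact hki ▸ hjk
      · exact absurd hjL (Finset.disjoint_left.mp (hLdisj k hk i hi hki) ((hT k hk).1 hjk))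
    · intro h
      exact ⟨⟨i, hi, h⟩, (hT i hi).1 h⟩
  have hTmem : Tset ∈ ((I.biUnion L).powerset.filter
      (fun T => ∑ i ∈ I, i * (T ∩ L i).card < q)) := by
    rw [Finset.mem_filter, Finset.mem_powerset]
    constructor
    · intro j hj
      obtain ⟨i, hi, hji⟩ := Finset.mem_biUnion.mp hj
      exact Finset.mem_biUnion.mpr ⟨i, hi, (hT i hi).1 hji⟩
    · calc ∑ i ∈ I, i * (Tset ∩ L i).card
          = ∑ i ∈ I, i * (A i).card :=
            Finset.sum_congr rfl (fun i hi => by rw [hTinter i hi, (hT i hi).2.1])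
        _ < q := hcard
  have hsig : ∑ j ∈ Tset, w j ≤ signature n q w I L :=
    Finset.le_sup (f := fun T => ∑ j ∈ T, w j) hTmem
  have hTdisj : (↑I : Set ℕ).PairwiseDisjoint T := by
    intro i hi k hk hik
    exact (hLdisj i hi k hk hik).mono (hT i hi).1 (hT k hk).1
  -- X1 is covered by the A i
  have hX1sub : X1 ⊆ I.biUnion A := by
    intro j hj
    simp only [hX1def, Finset.mem_filter, Finset.mem_univ, true_and] at hj
    obtain ⟨hx1, hz1⟩ := hj
    have hne : ¬ (∀ i ∈ I, j ∉ Vset n q w I L m i) := by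
      intro h
      have := hzout j h
      rw [hz1] at this
      norm_num at this
    push_neg at hne
    obtain ⟨i, hi, hjV⟩ := hne
    refine Finset.mem_biUnion.mpr ⟨i, hi, ?_⟩
    exact Finset.mem_filter.mpr ⟨(hS' i hi j).mpr ⟨hjV, hz1⟩, hx1⟩
  have hchain : ∑ j ∈ X1, w j ≤ signature n q w I L := by
    calc ∑ j ∈ X1, w j ≤ ∑ j ∈ I.biUnion A, w j :=
          Finset.sum_le_sum_of_subset hX1sub
      _ ≤ ∑ i ∈ I, ∑ j ∈ A i, w j := sum_biUnion_le_nat _ _ _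
      _ ≤ ∑ i ∈ I, ∑ j ∈ T i, w j :=
          Finset.sum_le_sum (fun i hi => (hT i hi).2.2)
      _ = ∑ j ∈ Tset, w j := (Finset.sum_biUnion hTdisj).symm
      _ ≤ signature n q w I L := hsig
  -- real arithmetic
  have key01 : ∀ (y : Fin n → ℝ), (∀ j, y j = 0 ∨ y j = 1) →
      ∑ j, (w j : ℝ) * y j = ∑ j ∈ Finset.univ.filter (fun j => y j = 1), (w j : ℝ) := by
    intro y hy
    rw [← Finset.sum_filter_add_sum_filter_not Finset.univ (fun j => y j = 1)
      (fun j => (w j : ℝ) * y j)]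
    have h2 : ∑ j ∈ Finset.univ.filter (fun j => ¬ y j = 1), (w j : ℝ) * y j = 0 := by
      apply Finset.sum_eq_zero
      intro j hj
      rcases hy j with h | h
      · rw [h, mul_zero]
      · exact absurd h (Finset.mem_filter.mp hj).2
    rw [h2, add_zero]
    exact Finset.sum_congr rfl (fun j hj => by
      rw [(Finset.mem_filter.mp hj).2, mul_one])
  set Xs : Finset (Fin n) := Finset.univ.filter (fun j => x j = 1) with hXsdef
  set Zs : Finset (Fin n) := Finset.univ.filter (fun j => z j = 1) with hZsdef
  set Z0 : Finset (Fin n) := Finset.univ.filter (fun j => ¬ z j = 1) with hZ0def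
  have e1 : (w0 : ℝ) ≤ ∑ j ∈ Xs, (w j : ℝ) := by
    rw [← key01 x hx]; exact hxge
  have esplit : ∑ j ∈ X1, (w j : ℝ) + ∑ j ∈ Xs.filter (fun j => ¬ z j = 1), (w j : ℝ)
      = ∑ j ∈ Xs, (w j : ℝ) := by
    have := Finset.sum_filter_add_sum_filter_not Xs (fun j => z j = 1)
      (fun j => (w j : ℝ))
    have hfe : Xs.filter (fun j => z j = 1) = X1 := by
      rw [hXsdef, hX1def, Finset.filter_filter]
    rw [hfe] at this
    exact this
  have e3 : ∑ j ∈ Xs.filter (fun j => ¬ z j = 1), (w j : ℝ) ≤ ∑ j ∈ Z0, (w j : ℝ) := by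
    apply Finset.sum_le_sum_of_subset_of_nonneg
    · intro j hj
      rw [hZ0def]
      simp only [Finset.mem_filter, Finset.mem_univ, true_and] at hj ⊢
      exact hj.2
    · intro j _ _
      exact Nat.cast_nonneg _
  have e4 : ∑ j ∈ Z0, (w j : ℝ) ≤ (w0 : ℝ) - (signature n q w I L : ℝ) - 1 := by
    have hz' : ∑ j, (w j : ℝ) * z j = ∑ j ∈ Zs, (w j : ℝ) := key01 z hz01
    have hsplit : ∑ j ∈ Zs, (w j : ℝ) + ∑ j ∈ Z0, (w j : ℝ) = ∑ j, (w j : ℝ) :=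
      Finset.sum_filter_add_sum_filter_not Finset.univ (fun j => z j = 1)
        (fun j => (w j : ℝ))
    rw [hz'] at hzval
    linarith
  have e5 : ∑ j ∈ X1, (w j : ℝ) ≤ (signature n q w I L : ℝ) := by
    exact_mod_cast hchain
  linarith
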